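/- If X and Y are sets such that there is no surjection from X onto ℕ and no surjection from Y onto ℕ, then there is no surjection from the Cartesian product X × Y onto ℕ. (Weakly Dedekind finite cardinals are closed under multiplication.) -/

import Mathlib

universe u v

/-- If a function to `ℕ` has infinite range, the domain surjects onto `ℕ`. -/
lemma aux_surj_of_infinite_range {α : Type*} (g : α → ℕ)
    (h : (Set.range g).Infinite) : ∃ f : α → ℕ, Function.Surjective f := by
  have : Infinite (Set.range g) := h.to_subtype
  obtain ⟨e⟩ := nonempty_equiv_of_countable (α := Set.range g) (β := ℕ)
  refine ⟨fun a => e ⟨g a, Set.mem_range_self a⟩, ?_⟩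
  exact e.surjective.comp Set.rangeFactorization_surjective

/-- Weakly Dedekind finite cardinals are closed under multiplication: if there is no surjection
from `X` onto `ℕ` and no surjection from `Y` onto `ℕ`, then there is no surjection from the
Cartesian product `X × Y` onto `ℕ`. -/
theorem not_exists_surjective_prod_to_nat (X : Type u) (Y : Type v)
    (hX : ¬∃ f : X → ℕ, Function.Surjective f) (hY : ¬∃ f : Y → ℕ, Function.Surjective f) :
    ¬∃ f : X × Y → ℕ, Function.Surjective f := by
  rintro ⟨f, hf⟩
  have hfin : ∀ x : X, (Set.range fun y => f (x, y)).Finite := by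
    intro x
    by_contra h
    exact hY (aux_surj_of_infinite_range _ h)
  classical
  set g : X → ℕ := fun x => (hfin x).toFinset.sup id with hg
  have hle : ∀ x y, f (x, y) ≤ g x := by
    intro x y
    exact Finset.le_sup (f := id) ((hfin x).mem_toFinset.mpr (Set.mem_range_self y))
  have hinf : (Set.range g).Infinite := by
    intro hfin'
    obtain ⟨N, hN⟩ := hfin'.bddAbove
    obtain ⟨⟨x, y⟩, hxy⟩ := hf (N + 1)
    have : N + 1 ≤ g x := hxy ▸ hle x y
    have : g x ≤ N := hN (Set.mem_range_self x)
    omega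
  exact hX (aux_surj_of_infinite_range g hinf)
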